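/- A connected gain graph (L,ζ), with L = (V_L, E_L), is a gain-line graph (with parameter s) if and only if there exists a partition E_L = E₁ ⊔ E₂ ⊔ ⋯ ⊔ E_k of the edge set such that every vertex of L is an endpoint of edges from at most two parts of the partition and, for each i = 1,…,k, the subgraph L_{E_i} of L edge-induced by E_i is a complete graph and the restricted gain function ζ_{E_i} is switching equivalent to the constant gain function 𝐬 in G(L_{E_i}). -/

import Mathlib

open SimpleGraph

/-- `ψ` is a gain function on `Γ`: on adjacent ordered pairs, reversing the
orientation inverts the gain. -/
def IsGainFun {V G : Type} [Group G] (Γ : SimpleGraph V) (ψ : V → V → G) : Prop :=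
  ∀ ⦃u v : V⦄, Γ.Adj u v → ψ v u = (ψ u v)⁻¹

/-- Two gain functions on `Γ` are switching equivalent. -/
def SwitchingEquiv {V G : Type} [Group G] (Γ : SimpleGraph V) (ψ₁ ψ₂ : V → V → G) : Prop :=
  ∃ f : V → G, ∀ ⦃u v : V⦄, Γ.Adj u v → ψ₂ u v = (f u)⁻¹ * ψ₁ u v * f v

/-- A `G`-phase of `Γ`: a choice of a group element for every incident
(vertex, edge) pair (the non-incident entries of the phase matrix are `0`,
so they carry no data). -/
def GPhase {V : Type} (Γ : SimpleGraph V) (G : Type) : Type :=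
  ∀ (v : V) (e : Γ.edgeSet), v ∈ (e : Sym2 V) → G

/-- `Ψ(H) = ψ`: the gain function associated with the phase `H` (with parameter `s₁`)
is `ψ`, i.e. `ψ(u,v) = s₁ · H(u,e) · H(v,e)⁻¹` for `e = {u,v}`. -/
def PsiEq {V G : Type} [Group G] {Γ : SimpleGraph V} (s₁ : G) (H : GPhase Γ G)
    (ψ : V → V → G) : Prop :=
  ∀ ⦃u v : V⦄ (h : Γ.Adj u v),
    ψ u v = s₁ * H u ⟨s(u, v), h⟩ (Sym2.mem_mk_left u v)
      * (H v ⟨s(u, v), h⟩ (Sym2.mem_mk_right u v))⁻¹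

/-- `Ψ_L(H) = ζ`: the gain function on the line graph associated with the phase `H`
(with parameter `s`) is `ζ`, i.e. `ζ(e_p,e_q) = s · H(w,e_p)⁻¹ · H(w,e_q)` whenever
`w` is a common endpoint of the distinct edges `e_p, e_q`. -/
def PsiLEq {V G : Type} [Group G] {Γ : SimpleGraph V} (s : G) (H : GPhase Γ G)
    (ζ : Γ.edgeSet → Γ.edgeSet → G) : Prop :=
  ∀ (p q : Γ.edgeSet) (w : V) (hp : w ∈ (p : Sym2 V)) (hq : w ∈ (q : Sym2 V)), p ≠ q →
    ζ p q = s * (H w p hp)⁻¹ * H w q hq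

/-- `(L, ζ)` is a gain-line graph (with parameter `s`): there are a graph `Γ`
with `L = L(Γ)` (up to isomorphism) and a `G`-phase `H` of `Γ` with `Ψ_L(H) = ζ`. -/
def IsGainLine {VL G : Type} [Group G] (s : G) (L : SimpleGraph VL) (ζ : VL → VL → G) : Prop :=
  ∃ (V' : Type) (Γ : SimpleGraph V') (φ : L ≃g Γ.lineGraph) (H : GPhase Γ G),
    PsiLEq s H fun p q => ζ (φ.symm p) (φ.symm q)
/-- The set `V_L(B)` of endpoints of edges in `B`. -/
def edgeVerts {V : Type} (Γ : SimpleGraph V) (B : Set Γ.edgeSet) : Set V :=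
  {v | ∃ e ∈ B, v ∈ (e : Sym2 V)}

/-- The edge-induced subgraph `Γ_B = (V_Γ(B), B)`. -/
def edgeInduced {V : Type} (Γ : SimpleGraph V) (B : Set Γ.edgeSet) :
    SimpleGraph (edgeVerts Γ B) where
  Adj u v := ∃ e ∈ B, (e : Sym2 V) = s(u.val, v.val)
  symm := by
    constructor
    rintro u v ⟨e, he, h⟩
    exact ⟨e, he, by rw [h, Sym2.eq_swap]⟩
  loopless := by
    constructor
    rintro u ⟨e, he, h⟩
    have h' := e.property
    rw [h] at h'
    exact Γ.irrefl ((SimpleGraph.mem_edgeSet (G := Γ)).mp h')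

private lemma sym2_rep' {α : Type*} (z : Sym2 α) : ∃ a b, z = s(a, b) :=
  z.ind (fun a b => ⟨a, b, rfl⟩)

private lemma sym2_common_unique {α : Type*} {p q : Sym2 α} (hpq : p ≠ q)
    {w w' : α} (hwp : w ∈ p) (hwq : w ∈ q) (hwp' : w' ∈ p) (hwq' : w' ∈ q) : w = w' := by
  by_contra h
  exact hpq (((Sym2.mem_and_mem_iff h).1 ⟨hwp, hwp'⟩).trans
    ((Sym2.mem_and_mem_iff h).1 ⟨hwq, hwq'⟩).symm)

/-- The "root graph" built from a Krausz partition: vertices are parts plus pendant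
copies of the original vertices; `P v` is the pair of ends assigned to `v`. -/
def krauszGraph {VL : Type} (k : ℕ) (P : VL → Sym2 (Fin k ⊕ VL)) :
    SimpleGraph (Fin k ⊕ VL) where
  Adj x y := x ≠ y ∧ ∃ v, s(x, y) = P v
  symm := by constructor; rintro x y ⟨hne, v, hv⟩; exact ⟨hne.symm, v, by rw [Sym2.eq_swap]; exact hv⟩
  loopless := by constructor; rintro x ⟨hne, _⟩; exact hne rfl

/-- **Krausz-type characterization (Theorem 3.2, (1) ⟺ (2)).** A connected gain graph
`(L, ζ)` is a gain-line graph if and only if there is a partition `E_L = E₁ ⊔ ⋯ ⊔ E_k`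
of its edge set such that every vertex is an endpoint of edges from at most two parts
and each edge-induced gain subgraph `(L_{E_i}, ζ_{E_i})` is a complete graph whose
gain function is switching equivalent to `𝐬`. -/
theorem gainLine_iff_krausz
    {VL G : Type} [Group G] [Fintype VL] (L : SimpleGraph VL) (hconn : L.Connected)
    (hE : L.edgeSet.Nonempty)
    (s : G) (hs : s * s = 1) (hsc : ∀ g : G, s * g = g * s)
    (ζ : VL → VL → G) (hζ : IsGainFun L ζ) :
    IsGainLine s L ζ ↔
      ∃ (k : ℕ) (E : Fin k → Set L.edgeSet),
        (∀ e : L.edgeSet, ∃! i : Fin k, e ∈ E i) ∧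
        (∀ v : VL, {i : Fin k | ∃ e ∈ E i, v ∈ (e : Sym2 VL)}.ncard ≤ 2) ∧
        (∀ i : Fin k,
          edgeInduced L (E i) = (⊤ : SimpleGraph (edgeVerts L (E i))) ∧
          SwitchingEquiv (edgeInduced L (E i))
            (fun u v : edgeVerts L (E i) => ζ u.val v.val) (fun _ _ => s)) := by
  
  constructor
  · -- forward direction
    rintro ⟨V', Γ, φ, H, hH⟩
    -- common vertex of the two Γ-edges corresponding to the endpoints of an L-edge
    have hcv : ∀ e : L.edgeSet, ∃ w : V', ∀ u : VL, u ∈ (e : Sym2 VL) → w ∈ (↑(φ u) : Sym2 V') := by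
      intro e
      obtain ⟨a, b, hab⟩ := sym2_rep' (e : Sym2 VL)
      have hAdj : L.Adj a b := by
        have := e.2; rw [hab] at this; exact this
      have hline : (Γ.lineGraph).Adj (φ a) (φ b) := φ.map_adj_iff.mpr hAdj
      obtain ⟨hne, w, hwa, hwb⟩ := SimpleGraph.lineGraph_adj_iff_exists.mp hline
      refine ⟨w, fun u hu => ?_⟩
      rw [hab] at hu
      rcases Sym2.mem_iff.mp hu with rfl | rfl
      · exact hwa
      · exact hwb
    choose cv hcv' using hcv
    have hφinj : Function.Injective φ := φ.toEquiv.injective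
    -- uniqueness of the common vertex
    have cu : ∀ (e : L.edgeSet) (a b : VL), (e : Sym2 VL) = s(a, b) →
        ∀ w : V', w ∈ (↑(φ a) : Sym2 V') → w ∈ (↑(φ b) : Sym2 V') → w = cv e := by
      intro e a b hab w hwa hwb
      have hAdj : L.Adj a b := by have := e.2; rw [hab] at this; exact this
      have hne : (↑(φ a) : Sym2 V') ≠ ↑(φ b) :=
        fun h => hAdj.ne (hφinj (Subtype.coe_injective h))
      exact sym2_common_unique hne hwa hwb
        (hcv' e a (hab ▸ Sym2.mem_mk_left a b)) (hcv' e b (hab ▸ Sym2.mem_mk_right a b))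
    have hfin : (Set.range cv).Finite := Set.finite_range cv
    set k := hfin.toFinset.card with hk
    set eqv : {x // x ∈ hfin.toFinset} ≃ Fin k := hfin.toFinset.equivFin with heqv
    set E : Fin k → Set L.edgeSet := fun i => {e | cv e = ((eqv.symm i : _) : V')} with hE
    refine ⟨k, E, ?_, ?_, ?_⟩
    · intro e
      have hw : cv e ∈ hfin.toFinset := by
        rw [Set.Finite.mem_toFinset]; exact Set.mem_range_self e
      refine ⟨eqv ⟨cv e, hw⟩, by simp [hE], fun j hj => ?_⟩
      have : eqv.symm j = ⟨cv e, hw⟩ := Subtype.ext hj.symm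
      rw [← this, Equiv.apply_symm_apply]
    · intro v
      obtain ⟨a, b, hab⟩ := sym2_rep' (↑(φ v) : Sym2 V')
      have hmap : ∀ i ∈ {i : Fin k | ∃ e ∈ E i, v ∈ (e : Sym2 VL)},
          ((eqv.symm i : _) : V') ∈ ({a, b} : Set V') := by
        rintro i ⟨e, he, hv⟩
        have : cv e ∈ (↑(φ v) : Sym2 V') := hcv' e v hv
        rw [hab, Sym2.mem_iff] at this
        rw [← he]
        rcases this with h | h
        · exact Or.inl h
        · exact Or.inr h
      have hinj : Set.InjOn (fun i => ((eqv.symm i : _) : V'))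
          {i : Fin k | ∃ e ∈ E i, v ∈ (e : Sym2 VL)} := by
        intro i _ j _ hij
        exact eqv.symm.injective (Subtype.ext hij)
      calc {i : Fin k | ∃ e ∈ E i, v ∈ (e : Sym2 VL)}.ncard
          ≤ ({a, b} : Set V').ncard := Set.ncard_le_ncard_of_injOn _ hmap hinj (Set.toFinite _)
        _ ≤ 2 := by
            refine le_trans (Set.ncard_insert_le a {b}) ?_
            simp
    · intro i
      set w : V' := ((eqv.symm i : _) : V') with hwdef
      -- every vertex of the part has w as an endpoint of its φ-image
      have hmem : ∀ u : VL, u ∈ edgeVerts L (E i) → w ∈ (↑(φ u) : Sym2 V') := by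
        rintro u ⟨e, he, hu⟩
        have : cv e = w := he
        rw [← this]
        exact hcv' e u hu
      have hadj : ∀ u v : VL, u ≠ v → u ∈ edgeVerts L (E i) → v ∈ edgeVerts L (E i) →
          ∃ f : L.edgeSet, f ∈ E i ∧ (f : Sym2 VL) = s(u, v) := by
        intro u v huv hu hv
        have hwu := hmem u hu
        have hwv := hmem v hv
        have hφne : φ u ≠ φ v := fun h => huv (hφinj h)
        have hline : (Γ.lineGraph).Adj (φ u) (φ v) :=
          SimpleGraph.lineGraph_adj_iff_exists.mpr ⟨hφne, w, hwu, hwv⟩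
        have hAdj : L.Adj u v := φ.map_adj_iff.mp hline
        refine ⟨⟨s(u, v), hAdj⟩, ?_, rfl⟩
        show cv _ = w
        exact (cu ⟨s(u, v), hAdj⟩ u v rfl w hwu hwv).symm
      constructor
      · ext ⟨u, hu⟩ ⟨v, hv⟩
        simp only [SimpleGraph.top_adj, ne_eq, Subtype.mk.injEq]
        constructor
        · rintro ⟨e, he, hev⟩
          intro huv
          subst huv
          have := e.2
          rw [hev] at this
          exact L.irrefl this
        · intro huv
          exact hadj u v huv hu hv
      · refine ⟨fun u => (H w (φ u.val) (hmem u.val u.property))⁻¹, ?_⟩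
        rintro ⟨u, hu⟩ ⟨v, hv⟩ ⟨e, he, hev⟩
        have huv : u ≠ v := by
          intro h; subst h
          have := e.2; rw [hev] at this; exact L.irrefl this
        have hφne : φ u ≠ φ v := fun h => huv (hφinj h)
        have key := hH (φ u) (φ v) w (hmem u hu) (hmem v hv) hφne
        simp only [RelIso.symm_apply_apply] at key
        simp only [inv_inv]
        rw [key]
        set x := H w (φ u) (hmem u hu)
        set y := H w (φ v) (hmem v hv)
        rw [show s * x⁻¹ = x⁻¹ * s from hsc x⁻¹]
        group
  · -- backward direction
    rintro ⟨k, E, huniq, hdeg, hparts⟩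
    -- every vertex has a neighbour
    have hnbr : ∀ v : VL, ∃ u, L.Adj v u := by
      intro v
      obtain ⟨z, hz⟩ := hE
      obtain ⟨a, b, rfl⟩ := sym2_rep' z
      have hab : L.Adj a b := hz
      by_cases hva : v = a
      · exact ⟨b, hva ▸ hab⟩
      · obtain ⟨w⟩ := hconn.preconnected v a
        cases w with
        | nil => exact absurd rfl hva
        | cons h _ => exact ⟨_, h⟩
    -- every vertex lies in some part
    have hsomepart : ∀ v : VL, ∃ i, v ∈ edgeVerts L (E i) := by
      intro v
      obtain ⟨u, hadj⟩ := hnbr v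
      obtain ⟨i, hi, -⟩ := huniq ⟨s(v, u), hadj⟩
      exact ⟨i, ⟨⟨s(v, u), hadj⟩, hi, Sym2.mem_mk_left v u⟩⟩
    choose pv hpv using hsomepart
    -- second end of the Γ-edge corresponding to v
    have hseex : ∀ v : VL, ∃ x : Fin k ⊕ VL,
        (x = Sum.inr v ∧ ∀ j, v ∈ edgeVerts L (E j) → j = pv v) ∨
        (∃ j, x = Sum.inl j ∧ v ∈ edgeVerts L (E j) ∧ j ≠ pv v) := by
      intro v
      by_cases h : ∃ j, v ∈ edgeVerts L (E j) ∧ j ≠ pv v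
      · obtain ⟨j, hj, hne⟩ := h; exact ⟨Sum.inl j, Or.inr ⟨j, rfl, hj, hne⟩⟩
      · push_neg at h
        exact ⟨Sum.inr v, Or.inl ⟨rfl, fun j hj => h j hj⟩⟩
    choose se hse using hseex
    set P : VL → Sym2 (Fin k ⊕ VL) := fun v => s(Sum.inl (pv v), se v) with hP
    set Γ := krauszGraph k P with hΓ
    -- (A) two distinct parts share at most one vertex
    have hA : ∀ (i j : Fin k), i ≠ j → ∀ u v : VL, u ∈ edgeVerts L (E i) →
        u ∈ edgeVerts L (E j) → v ∈ edgeVerts L (E i) → v ∈ edgeVerts L (E j) → u = v := by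
      intro i j hij u v hui huj hvi hvj
      by_contra hne
      have h1 : (edgeInduced L (E i)).Adj ⟨u, hui⟩ ⟨v, hvi⟩ := by
        rw [(hparts i).1]; exact fun h => hne (congrArg Subtype.val h)
      obtain ⟨e, hei, hev⟩ := h1
      have h2 : (edgeInduced L (E j)).Adj ⟨u, huj⟩ ⟨v, hvj⟩ := by
        rw [(hparts j).1]; exact fun h => hne (congrArg Subtype.val h)
      obtain ⟨e', hej, hev'⟩ := h2
      have hee : e = e' := Subtype.ext (hev.trans hev'.symm)
      obtain ⟨i₀, hi₀, hu₀⟩ := huniq e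
      exact hij ((hu₀ i hei).trans (hu₀ j (hee ▸ hej)).symm)
    -- (B) every part of v is an end of P v
    have hB : ∀ (v : VL) (i : Fin k), v ∈ edgeVerts L (E i) → Sum.inl i ∈ P v := by
      intro v i hi
      rcases hse v with ⟨hx, hall⟩ | ⟨j, hxj, hj, hjne⟩
      · rw [hall i hi]; exact Sym2.mem_mk_left _ _
      · by_cases hipv : i = pv v
        · rw [hipv]; exact Sym2.mem_mk_left _ _
        by_cases hij : i = j
        · subst hij
          show Sum.inl i ∈ s(Sum.inl (pv v), se v)
          rw [hxj]; exact Sym2.mem_mk_right _ _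
        exfalso
        have hsub : ({pv v, j, i} : Set (Fin k)) ⊆
            {i' : Fin k | ∃ e ∈ E i', v ∈ (e : Sym2 VL)} := by
          rintro x (rfl | rfl | rfl)
          · exact hpv v
          · exact hj
          · exact hi
        have hnm : pv v ∉ ({j, i} : Set (Fin k)) := by
          simp only [Set.mem_insert_iff, Set.mem_singleton_iff]
          rintro (h | h)
          · exact hjne h.symm
          · exact hipv h.symm
        have h3 : ({pv v, j, i} : Set (Fin k)).ncard = 3 := by
          rw [Set.ncard_insert_of_notMem hnm (Set.toFinite _),
            Set.ncard_pair (fun h => hij h.symm)]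
        have hle := Set.ncard_le_ncard hsub (Set.toFinite _)
        have := hdeg v
        omega
    -- (B') every `inl` end of P v is a part of v
    have hB' : ∀ (v : VL) (i : Fin k), Sum.inl i ∈ P v → v ∈ edgeVerts L (E i) := by
      intro v i hmem
      rcases Sym2.mem_iff.mp hmem with h | h
      · obtain rfl : i = pv v := Sum.inl_injective h
        exact hpv v
      · rcases hse v with ⟨hx, -⟩ | ⟨j, hxj, hj, -⟩
        · rw [hx] at h; simp at h
        · rw [hxj] at h
          obtain rfl : i = j := Sum.inl_injective h
          exact hj
    -- (C) a common end of two distinct edges is a part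
    have hC : ∀ (u v : VL), u ≠ v → ∀ x, x ∈ P u → x ∈ P v → ∃ i, x = Sum.inl i := by
      intro u v huv x hxu hxv
      rcases x with i | a
      · exact ⟨i, rfl⟩
      exfalso
      have hu : a = u := by
        rcases Sym2.mem_iff.mp hxu with h | h
        · simp at h
        · rcases hse u with ⟨hx, -⟩ | ⟨j, hxj, -, -⟩
          · rw [hx] at h; exact Sum.inr_injective h
          · rw [hxj] at h; simp at h
      have hv : a = v := by
        rcases Sym2.mem_iff.mp hxv with h | h
        · simp at h
        · rcases hse v with ⟨hx, -⟩ | ⟨j, hxj, -, -⟩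
          · rw [hx] at h; exact Sum.inr_injective h
          · rw [hxj] at h; simp at h
      exact huv (hu ▸ hv)
    have hPne : ∀ v, Sum.inl (pv v) ≠ se v := by
      intro v
      rcases hse v with ⟨hx, -⟩ | ⟨j, hxj, -, hjne⟩
      · rw [hx]; simp
      · rw [hxj]
        exact fun h => hjne (Sum.inl_injective h).symm
    set ε : VL → Γ.edgeSet := fun v => ⟨P v, (SimpleGraph.mem_edgeSet Γ).mpr ⟨hPne v, v, rfl⟩⟩ with hε
    have hεinj : Function.Injective ε := by
      intro u v huv
      have hPuv : P u = P v := congrArg Subtype.val huv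
      have hPuv' : s(Sum.inl (pv u), se u) = s(Sum.inl (pv v), se v) := hPuv
      rcases hse u with ⟨hxu, -⟩ | ⟨ju, hxu, hju, hjune⟩ <;>
        rcases hse v with ⟨hxv, -⟩ | ⟨jv, hxv, hjv, hjvne⟩ <;>
        rw [hxu, hxv] at hPuv' <;>
        simp only [Sym2.eq_iff, Sum.inl.injEq, Sum.inr.injEq] at hPuv'
      · rcases hPuv' with ⟨-, h⟩ | ⟨h, -⟩
        · exact h
        · exact absurd h (by simp)
      · rcases hPuv' with ⟨-, h⟩ | ⟨-, h⟩ <;> exact absurd h (by simp)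
      · rcases hPuv' with ⟨-, h⟩ | ⟨h, -⟩ <;> exact absurd h (by simp)
      · have hne : pv u ≠ ju := fun h => hjune h.symm
        rcases hPuv' with ⟨h1, h2⟩ | ⟨h1, h2⟩
        · exact hA (pv u) ju hne u v (hpv u) hju (h1 ▸ hpv v) (h2 ▸ hjv)
        · exact hA (pv u) ju hne u v (hpv u) hju (h1 ▸ hjv) (h2 ▸ hpv v)
    have hεsurj : Function.Surjective ε := by
      rintro ⟨z, hz⟩
      obtain ⟨x, y, rfl⟩ := sym2_rep' z
      have hadj : Γ.Adj x y := (SimpleGraph.mem_edgeSet Γ).mp hz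
      obtain ⟨-, v, hv⟩ := hadj
      exact ⟨v, Subtype.ext hv.symm⟩
    set eqv := Equiv.ofBijective ε ⟨hεinj, hεsurj⟩ with heqv
    have hadj_iff : ∀ u v : VL, (Γ.lineGraph).Adj (ε u) (ε v) ↔ L.Adj u v := by
      intro u v
      rw [SimpleGraph.lineGraph_adj_iff_exists]
      constructor
      · rintro ⟨hne, x, hxu, hxv⟩
        have huv : u ≠ v := fun h => hne (congrArg ε h)
        obtain ⟨i, rfl⟩ := hC u v huv x hxu hxv
        have hui := hB' u i hxu
        have hvi := hB' v i hxv
        have hadjE : (edgeInduced L (E i)).Adj ⟨u, hui⟩ ⟨v, hvi⟩ := by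
          rw [(hparts i).1]; exact fun h => huv (congrArg Subtype.val h)
        obtain ⟨e, -, hev⟩ := hadjE
        have := e.2; rw [hev] at this; exact this
      · intro h
        obtain ⟨i, hi, -⟩ := huniq ⟨s(u, v), h⟩
        have hui : u ∈ edgeVerts L (E i) := ⟨_, hi, Sym2.mem_mk_left u v⟩
        have hvi : v ∈ edgeVerts L (E i) := ⟨_, hi, Sym2.mem_mk_right u v⟩
        exact ⟨fun he => h.ne (hεinj he), Sum.inl i, hB u i hui, hB v i hvi⟩
    choose F hF using fun i => (hparts i).2
    -- the phase function
    have hHg : ∀ (x : Fin k ⊕ VL) (e : Γ.edgeSet), ∃ g : G,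
        ∀ i : Fin k, x = Sum.inl i →
          ∀ h : (eqv.symm e : VL) ∈ edgeVerts L (E i), g = (F i ⟨eqv.symm e, h⟩)⁻¹ := by
      intro x e
      rcases x with i | a
      · by_cases h : (eqv.symm e : VL) ∈ edgeVerts L (E i)
        · refine ⟨(F i ⟨eqv.symm e, h⟩)⁻¹, ?_⟩
          rintro i' hi' h'
          obtain rfl : i = i' := Sum.inl_injective hi'
          rfl
        · refine ⟨1, fun i' hi' h' => ?_⟩
          obtain rfl : i = i' := Sum.inl_injective hi'
          exact absurd h' h
      · exact ⟨1, fun i hi => by simp at hi⟩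
    choose Hg hHg' using hHg
    have main : PsiLEq s (fun x e _ => Hg x e) (fun p q => ζ (eqv.symm p) (eqv.symm q)) := by
      intro p q w hp hq hpq
      set u : VL := eqv.symm p with hu
      set v : VL := eqv.symm q with hv
      have hpu : p = ε u := (eqv.apply_symm_apply p).symm
      have hqv : q = ε v := (eqv.apply_symm_apply q).symm
      have huv : u ≠ v := fun h => hpq (by rw [hpu, hqv, h])
      have hpu' : w ∈ P u := by rw [hpu] at hp; exact hp
      have hqv' : w ∈ P v := by rw [hqv] at hq; exact hq
      obtain ⟨i, rfl⟩ := hC u v huv w hpu' hqv'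
      have hui := hB' u i hpu'
      have hvi := hB' v i hqv'
      have hadjE : (edgeInduced L (E i)).Adj ⟨u, hui⟩ ⟨v, hvi⟩ := by
        rw [(hparts i).1]; exact fun h => huv (congrArg Subtype.val h)
      have key := hF i hadjE
      have h1 : Hg (Sum.inl i) p = (F i ⟨u, hui⟩)⁻¹ := hHg' (Sum.inl i) p i rfl hui
      have h2 : Hg (Sum.inl i) q = (F i ⟨v, hvi⟩)⁻¹ := hHg' (Sum.inl i) q i rfl hvi
      show ζ u v = s * (Hg (Sum.inl i) p)⁻¹ * Hg (Sum.inl i) q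
      rw [h1, h2, inv_inv]
      have key' : s = (F i ⟨u, hui⟩)⁻¹ * ζ u v * F i ⟨v, hvi⟩ := key
      have hζuv : ζ u v = F i ⟨u, hui⟩ * s * (F i ⟨v, hvi⟩)⁻¹ := by rw [key']; group
      rw [hζuv, hsc]
    exact ⟨Fin k ⊕ VL, Γ, ⟨eqv, fun {a b} => hadj_iff a b⟩, fun x e _ => Hg x e, main⟩
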